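/- Let α, β, μ be real numbers with 0 < α < β and μ > 0, and suppose the cubic p(λ) = αλ³ + λ² + βμλ + μ has three distinct complex roots. Let σ be the maximum of the real parts of the roots of p. Then σ < 0, and every three-times differentiable function z : ℝ → ℂ satisfying α z'''(t) + z''(t) + βμ z'(t) + μ z(t) = 0 for all t admits a constant C ≥ 0 such that |z(t)| ≤ C·e^{σt} for all t ≥ 0. -/

import Mathlib

lemma exp_deriv' (b : ℂ) (t : ℝ) :
    HasDerivAt (fun s : ℝ => Complex.exp (b * s)) (b * Complex.exp (b * t)) t := by
  have h1 : HasDerivAt (fun s : ℝ => b * (s : ℂ)) b t := by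
    simpa using (Complex.ofRealCLM.hasDerivAt (x := t)).const_mul b
  simpa [mul_comm] using h1.cexp

lemma lin1 (a : ℂ) (f f' : ℝ → ℂ) (hf' : ∀ t, HasDerivAt f (f' t) t)
    (heq : ∀ t, f' t = a * f t) : ∀ t, f t = f 0 * Complex.exp (a * t) := by
  have hg : ∀ t, HasDerivAt (fun s => f s * Complex.exp (-a * s)) 0 t := by
    intro t
    have := (hf' t).mul (exp_deriv' (-a) t)
    refine this.congr_deriv ?_
    rw [heq t]; ring
  have hconst : ∀ t, f t * Complex.exp (-a * t) = f 0 * Complex.exp (-a * 0) := by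
    intro t
    exact is_const_of_deriv_eq_zero (fun x => (hg x).differentiableAt)
      (fun x => (hg x).deriv) t 0
  intro t
  have h := hconst t
  have h2 : f t * Complex.exp (-a * t) * Complex.exp (a * t) = f 0 * Complex.exp (a * t) := by
    rw [h]; norm_num
  rwa [mul_assoc, ← Complex.exp_add, neg_mul, neg_add_cancel, Complex.exp_zero, mul_one] at h2

lemma lin3 (a b₁ b₂ c₁ c₂ : ℂ) (h1 : b₁ ≠ a) (h2 : b₂ ≠ a) (f f' : ℝ → ℂ)
    (hf' : ∀ t, HasDerivAt f (f' t) t)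
    (heq : ∀ t, f' t = a * f t + c₁ * Complex.exp (b₁ * t) + c₂ * Complex.exp (b₂ * t)) :
    ∃ d d₁ d₂ : ℂ, ∀ t : ℝ,
      f t = d * Complex.exp (a * t) + d₁ * Complex.exp (b₁ * t) + d₂ * Complex.exp (b₂ * t) := by
  set k₁ := c₁ / (b₁ - a) with hk₁
  set k₂ := c₂ / (b₂ - a) with hk₂
  set g : ℝ → ℂ := fun t => f t - k₁ * Complex.exp (b₁ * t) - k₂ * Complex.exp (b₂ * t) with hgdef
  have hb1 : b₁ - a ≠ 0 := sub_ne_zero.mpr h1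
  have hb2 : b₂ - a ≠ 0 := sub_ne_zero.mpr h2
  have hg' : ∀ t, HasDerivAt g
      (f' t - k₁ * (b₁ * Complex.exp (b₁ * t)) - k₂ * (b₂ * Complex.exp (b₂ * t))) t := by
    intro t
    exact ((hf' t).sub ((exp_deriv' b₁ t).const_mul k₁)).sub ((exp_deriv' b₂ t).const_mul k₂)
  have hgeq : ∀ t, f' t - k₁ * (b₁ * Complex.exp (b₁ * t)) - k₂ * (b₂ * Complex.exp (b₂ * t))
      = a * g t := by
    intro t
    rw [heq t, hgdef]
    simp only [hk₁, hk₂]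
    field_simp
    ring
  have := lin1 a g _ hg' hgeq
  refine ⟨g 0, k₁, k₂, fun t => ?_⟩
  have ht := this t
  rw [hgdef] at ht ⊢
  simp only at ht
  linear_combination ht

lemma root_re_neg (α β μ : ℝ) (hα : 0 < α) (hαβ : α < β) (hμ : 0 < μ) (w : ℂ)
    (hw : (α : ℂ) * w ^ 3 + w ^ 2 + (β : ℂ) * (μ : ℂ) * w + (μ : ℂ) = 0) : w.re < 0 := by
  by_contra hx
  push_neg at hx
  have hre := congrArg Complex.re hw
  have him := congrArg Complex.im hw
  simp only [Complex.add_re, Complex.add_im, Complex.mul_re, Complex.mul_im,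
    Complex.ofReal_re, Complex.ofReal_im, Complex.zero_re, Complex.zero_im,
    pow_succ, pow_zero, one_mul, Complex.one_re, Complex.one_im] at hre him
  ring_nf at hre him
  rcases eq_or_ne w.im 0 with hy | hy
  · rw [hy] at hre
    nlinarith [mul_nonneg (mul_nonneg hα.le hx) (mul_nonneg hx hx), mul_nonneg hx hx,
      mul_pos hμ (sub_pos.mpr hαβ), mul_nonneg hx hμ.le]
  · have key : 3 * α * w.re ^ 2 - α * w.im ^ 2 + 2 * w.re + β * μ = 0 := by
      have h0 : w.im * (3 * α * w.re ^ 2 - α * w.im ^ 2 + 2 * w.re + β * μ) = 0 := by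
        linear_combination him
      exact (mul_eq_zero.mp h0).resolve_left hy
    have h8 : 8 * α ^ 2 * w.re ^ 3 + 8 * α * w.re ^ 2 + 2 * α * β * μ * w.re + 2 * w.re
        + β * μ - α * μ = 0 := by
      linear_combination (-α) * hre + (3 * α * w.re + 1) * key
    nlinarith [mul_nonneg (mul_nonneg (mul_nonneg hα.le hα.le) hx) (mul_nonneg hx hx),
      mul_nonneg hα.le (mul_nonneg hx hx), mul_pos hμ (sub_pos.mpr hαβ),
      mul_nonneg (mul_nonneg (mul_nonneg hα.le (hα.trans hαβ).le) hμ.le) hx]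

/-- For `0 < α < β`, `μ > 0`, suppose the cubic
`p(λ) = αλ³ + λ² + βμλ + μ` has three distinct complex roots, and let `σ` be the
maximum of the real parts of the roots of `p`. Then `σ < 0`, and every three-times
differentiable `z : ℝ → ℂ` satisfying `αz''' + z'' + βμz' + μz = 0` admits `C ≥ 0`
with `|z(t)| ≤ C·e^{σt}` for all `t ≥ 0`. -/
theorem stmt_19 (α β μ : ℝ) (hα : 0 < α) (hαβ : α < β) (hμ : 0 < μ)
    (hdistinct : ∃ w₁ w₂ w₃ : ℂ, w₁ ≠ w₂ ∧ w₁ ≠ w₃ ∧ w₂ ≠ w₃ ∧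
      (α : ℂ) * w₁ ^ 3 + w₁ ^ 2 + (β : ℂ) * (μ : ℂ) * w₁ + (μ : ℂ) = 0 ∧
      (α : ℂ) * w₂ ^ 3 + w₂ ^ 2 + (β : ℂ) * (μ : ℂ) * w₂ + (μ : ℂ) = 0 ∧
      (α : ℂ) * w₃ ^ 3 + w₃ ^ 2 + (β : ℂ) * (μ : ℂ) * w₃ + (μ : ℂ) = 0)
    (σ : ℝ)
    (hmax : ∀ w : ℂ, (α : ℂ) * w ^ 3 + w ^ 2 + (β : ℂ) * (μ : ℂ) * w + (μ : ℂ) = 0 →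
      w.re ≤ σ)
    (hatt : ∃ w : ℂ, (α : ℂ) * w ^ 3 + w ^ 2 + (β : ℂ) * (μ : ℂ) * w + (μ : ℂ) = 0 ∧
      w.re = σ) :
    σ < 0 ∧
    ∀ (z z₁ z₂ z₃ : ℝ → ℂ),
      (∀ t : ℝ, HasDerivAt z (z₁ t) t) →
      (∀ t : ℝ, HasDerivAt z₁ (z₂ t) t) →
      (∀ t : ℝ, HasDerivAt z₂ (z₃ t) t) →
      (∀ t : ℝ, (α : ℂ) * z₃ t + z₂ t + (β : ℂ) * (μ : ℂ) * z₁ t + (μ : ℂ) * z t = 0) →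
      ∃ C : ℝ, 0 ≤ C ∧ ∀ t : ℝ, 0 ≤ t → ‖z t‖ ≤ C * Real.exp (σ * t) := by
  obtain ⟨w₁, w₂, w₃, h12, h13, h23, e1, e2, e3⟩ := hdistinct
  constructor
  · obtain ⟨w, hwroot, hwre⟩ := hatt
    exact hwre ▸ root_re_neg α β μ hα hαβ hμ w hwroot
  intro z z₁ z₂ z₃ hz hz1 hz2 hode
  have hαC : (α : ℂ) ≠ 0 := by exact_mod_cast hα.ne'
  have d12 : w₁ - w₂ ≠ 0 := sub_ne_zero.mpr h12
  have d13 : w₁ - w₃ ≠ 0 := sub_ne_zero.mpr h13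
  have d23 : w₂ - w₃ ≠ 0 := sub_ne_zero.mpr h23
  -- Vieta relations
  have g12 : (α : ℂ) * (w₁ ^ 2 + w₁ * w₂ + w₂ ^ 2) + (w₁ + w₂) + (β : ℂ) * (μ : ℂ) = 0 := by
    have h0 : (w₁ - w₂) * ((α : ℂ) * (w₁ ^ 2 + w₁ * w₂ + w₂ ^ 2) + (w₁ + w₂)
        + (β : ℂ) * (μ : ℂ)) = 0 := by linear_combination e1 - e2
    exact (mul_eq_zero.mp h0).resolve_left d12
  have g13 : (α : ℂ) * (w₁ ^ 2 + w₁ * w₃ + w₃ ^ 2) + (w₁ + w₃) + (β : ℂ) * (μ : ℂ) = 0 := by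
    have h0 : (w₁ - w₃) * ((α : ℂ) * (w₁ ^ 2 + w₁ * w₃ + w₃ ^ 2) + (w₁ + w₃)
        + (β : ℂ) * (μ : ℂ)) = 0 := by linear_combination e1 - e3
    exact (mul_eq_zero.mp h0).resolve_left d13
  have hs1 : (α : ℂ) * (w₁ + w₂ + w₃) + 1 = 0 := by
    have h0 : (w₂ - w₃) * ((α : ℂ) * (w₁ + w₂ + w₃) + 1) = 0 := by
      linear_combination g12 - g13
    exact (mul_eq_zero.mp h0).resolve_left d23
  have hs2 : (α : ℂ) * (w₁ * w₂ + w₁ * w₃ + w₂ * w₃) - (β : ℂ) * (μ : ℂ) = 0 := by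
    linear_combination (w₁ + w₂) * hs1 - g12
  have hs3 : (α : ℂ) * (w₁ * w₂ * w₃) + (μ : ℂ) = 0 := by
    linear_combination e1 - w₁ ^ 2 * hs1 + w₁ * hs2
  -- cascade of first-order ODEs
  set y₂ : ℝ → ℂ := fun t => z₂ t - (w₂ + w₃) * z₁ t + w₂ * w₃ * z t with hy2def
  have hy₂' : ∀ t, HasDerivAt y₂ (z₃ t - (w₂ + w₃) * z₂ t + w₂ * w₃ * z₁ t) t := fun t =>
    ((hz2 t).sub ((hz1 t).const_mul (w₂ + w₃))).add ((hz t).const_mul (w₂ * w₃))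
  have heq2 : ∀ t, z₃ t - (w₂ + w₃) * z₂ t + w₂ * w₃ * z₁ t = w₁ * y₂ t := by
    intro t
    apply mul_left_cancel₀ hαC
    simp only [hy2def]
    linear_combination hode t - z₂ t * hs1 + z₁ t * hs2 - z t * hs3
  have hy₂sol := lin1 w₁ y₂ _ hy₂' heq2
  set y₁ : ℝ → ℂ := fun t => z₁ t - w₃ * z t with hy1def
  have hy₁' : ∀ t, HasDerivAt y₁ (z₂ t - w₃ * z₁ t) t := fun t =>
    (hz1 t).sub ((hz t).const_mul w₃)
  have heq1 : ∀ t, z₂ t - w₃ * z₁ t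
      = w₂ * y₁ t + (y₂ 0) * Complex.exp (w₁ * t) + 0 * Complex.exp (w₁ * t) := by
    intro t
    rw [← hy₂sol t]
    simp only [hy1def, hy2def]
    ring
  obtain ⟨d, d₁, d₂, hy₁sol⟩ := lin3 w₂ w₁ w₁ (y₂ 0) 0 h12 h12 y₁ _ hy₁' heq1
  have heqz : ∀ t, z₁ t
      = w₃ * z t + d * Complex.exp (w₂ * t) + (d₁ + d₂) * Complex.exp (w₁ * t) := by
    intro t
    have := hy₁sol t
    simp only [hy1def] at this
    linear_combination this
  obtain ⟨c₀, c₁, c₂, hzsol⟩ := lin3 w₃ w₂ w₁ d (d₁ + d₂) h23 h13 z z₁ hz heqz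
  refine ⟨‖c₀‖ + ‖c₁‖ + ‖c₂‖, by positivity, fun t ht => ?_⟩
  rw [hzsol t]
  have habs : ∀ w : ℂ, ‖Complex.exp (w * t)‖ = Real.exp (w.re * t) := by
    intro w
    rw [Complex.norm_exp]
    norm_num [Complex.mul_re]
  calc ‖c₀ * Complex.exp (w₃ * t) + c₁ * Complex.exp (w₂ * t)
        + c₂ * Complex.exp (w₁ * t)‖
      ≤ ‖c₀ * Complex.exp (w₃ * t)‖ + ‖c₁ * Complex.exp (w₂ * t)‖
        + ‖c₂ * Complex.exp (w₁ * t)‖ := by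
        exact (norm_add_le _ _).trans (by gcongr; exact norm_add_le _ _)
    _ = ‖c₀‖ * Real.exp (w₃.re * t) + ‖c₁‖ * Real.exp (w₂.re * t)
        + ‖c₂‖ * Real.exp (w₁.re * t) := by
        simp [norm_mul, habs]
    _ ≤ ‖c₀‖ * Real.exp (σ * t) + ‖c₁‖ * Real.exp (σ * t)
        + ‖c₂‖ * Real.exp (σ * t) := by
        gcongr <;> first
          | exact hmax _ e3 | exact hmax _ e2 | exact hmax _ e1
    _ = (‖c₀‖ + ‖c₁‖ + ‖c₂‖) * Real.exp (σ * t) := by ring
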